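/- Let X ~ N(0, h) with h ≥ 0 and E_c := exp(c·X − c²h/2). Then for all c, d ∈ ℂ: E[X · E_c · E_d] = (c + d)·h·exp(c·d·h). -/

import Mathlib

open MeasureTheory ProbabilityTheory Complex NNReal Real Filter Set

lemma aux_tendsto {b : ℂ} (hb : b.re < 0) (c : ℂ) :
    Tendsto (fun x : ℝ => Complex.exp (b * x ^ 2 + c * x)) atTop (nhds 0) := by
  rw [tendsto_zero_iff_norm_tendsto_zero]
  have : ∀ x : ℝ, ‖Complex.exp (b * x ^ 2 + c * x)‖ = Real.exp (b.re * x ^ 2 + c.re * x) := by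
    intro x
    rw [Complex.norm_exp]
    congr 1
    simp [Complex.add_re, Complex.mul_re, ← Complex.ofReal_pow]
  simp_rw [this]
  apply Real.tendsto_exp_atBot.comp
  have : ∀ x : ℝ, b.re * x ^ 2 + c.re * x = (b.re * x + c.re) * x := by intro x; ring
  simp_rw [this]
  apply Filter.Tendsto.atBot_mul_atTop₀ ?_ tendsto_id
  exact tendsto_atBot_add_const_right _ _ ((tendsto_const_mul_atBot_of_neg hb).mpr tendsto_id)

lemma aux_tendsto_bot {b : ℂ} (hb : b.re < 0) (c : ℂ) :
    Tendsto (fun x : ℝ => Complex.exp (b * x ^ 2 + c * x)) atBot (nhds 0) := by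
  have h := (aux_tendsto hb (-c)).comp tendsto_neg_atBot_atTop
  refine h.congr fun x => ?_
  simp only [Function.comp]
  congr 1
  push_cast
  ring

lemma aux_integrable_deriv {b : ℂ} (hb : b.re < 0) (c : ℂ) :
    Integrable (fun x : ℝ => (2 * b * x + c) * Complex.exp (b * x ^ 2 + c * x)) := by
  have h1 := (integrable_cexp_quadratic' hb (c + 1) 0).norm
  have h2 := (integrable_cexp_quadratic' hb (c - 1) 0).norm
  refine Integrable.mono' (((h1.add h2).const_mul (2 * ‖b‖ + ‖c‖))) ?_ ?_
  · apply Continuous.aestronglyMeasurable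
    fun_prop
  · filter_upwards with x
    rw [norm_mul]
    have hx : ‖(2 * b * (x:ℂ) + c)‖ ≤ (2 * ‖b‖ + ‖c‖) * Real.exp |x| := by
      calc ‖(2 * b * (x:ℂ) + c)‖ ≤ ‖2 * b * (x:ℂ)‖ + ‖c‖ := norm_add_le _ _
        _ ≤ 2 * ‖b‖ * |x| + ‖c‖ := by
            rw [norm_mul, norm_mul]
            simp [Complex.norm_real, Real.norm_eq_abs]
        _ ≤ 2 * ‖b‖ * Real.exp |x| + ‖c‖ * Real.exp |x| := by
            gcongr
            · exact (Real.add_one_le_exp _).trans' (by linarith [abs_nonneg x])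
            · nlinarith [Real.one_le_exp (abs_nonneg x), norm_nonneg c]
        _ = (2 * ‖b‖ + ‖c‖) * Real.exp |x| := by ring
    have hkey : Real.exp |x| * ‖Complex.exp (b * x ^ 2 + c * x)‖ ≤
        ‖Complex.exp (b * x ^ 2 + (c + 1) * x + 0)‖ + ‖Complex.exp (b * x ^ 2 + (c - 1) * x + 0)‖ := by
      have hn : ∀ t : ℂ, ‖Complex.exp (b * x ^ 2 + t * x + 0)‖ =
          Real.exp (b.re * x ^ 2 + t.re * x) := by
        intro t
        rw [Complex.norm_exp]
        congr 1
        simp [Complex.add_re, Complex.mul_re, ← Complex.ofReal_pow]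
      rw [hn, hn]
      have hn2 : ‖Complex.exp (b * x ^ 2 + c * x)‖ = Real.exp (b.re * x ^ 2 + c.re * x) := by
        rw [Complex.norm_exp]
        congr 1
        simp [Complex.add_re, Complex.mul_re, ← Complex.ofReal_pow]
      rw [hn2, ← Real.exp_add]
      simp only [Complex.add_re, Complex.sub_re, Complex.one_re]
      rcases abs_cases x with ⟨hax, _⟩ | ⟨hax, _⟩
      · rw [hax]
        have heq : x + (b.re * x ^ 2 + c.re * x) = b.re * x ^ 2 + (c.re + 1) * x := by ring
        rw [heq]
        exact le_add_of_nonneg_right (Real.exp_nonneg _)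
      · rw [hax]
        have heq : -x + (b.re * x ^ 2 + c.re * x) = b.re * x ^ 2 + (c.re - 1) * x := by ring
        rw [heq]
        exact le_add_of_nonneg_left (Real.exp_nonneg _)
    calc ‖(2 * b * (x:ℂ) + c)‖ * ‖Complex.exp (b * x ^ 2 + c * x)‖
        ≤ (2 * ‖b‖ + ‖c‖) * Real.exp |x| * ‖Complex.exp (b * x ^ 2 + c * x)‖ := by
          gcongr
      _ = (2 * ‖b‖ + ‖c‖) * (Real.exp |x| * ‖Complex.exp (b * x ^ 2 + c * x)‖) := by ring
      _ ≤ (2 * ‖b‖ + ‖c‖) * (‖Complex.exp (b * x ^ 2 + (c + 1) * x + 0)‖ +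
            ‖Complex.exp (b * x ^ 2 + (c - 1) * x + 0)‖) := by
          gcongr

lemma aux_hasDerivAt {b c : ℂ} (x : ℝ) :
    HasDerivAt (fun y : ℝ => Complex.exp (b * y ^ 2 + c * y))
      ((2 * b * x + c) * Complex.exp (b * x ^ 2 + c * x)) x := by
  have H : HasDerivAt (fun z : ℂ => Complex.exp (b * z ^ 2 + c * z))
      ((2 * b * x + c) * Complex.exp (b * (x:ℂ) ^ 2 + c * x)) (x : ℂ) := by
    have h1 : HasDerivAt (fun z : ℂ => b * z ^ 2 + c * z) (2 * b * x + c) (x : ℂ) := by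
      have := ((hasDerivAt_pow 2 (x:ℂ)).const_mul b).add ((hasDerivAt_id (x:ℂ)).const_mul c)
      exact this.congr_deriv (by push_cast; ring)
    simpa [mul_comm] using h1.cexp
  exact H.comp_ofReal

lemma aux_integral_deriv_zero {b : ℂ} (hb : b.re < 0) (c : ℂ) :
    ∫ x : ℝ, (2 * b * x + c) * Complex.exp (b * x ^ 2 + c * x) = 0 := by
  have hint := aux_integrable_deriv hb c
  have hIic : ∫ x in Iic (0:ℝ), (2 * b * x + c) * Complex.exp (b * x ^ 2 + c * x) =
      Complex.exp (b * 0 ^ 2 + c * 0) - 0 := by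
    refine integral_Iic_of_hasDerivAt_of_tendsto ?_ (fun x _ => aux_hasDerivAt x)
      hint.integrableOn (aux_tendsto_bot hb c)
    exact (aux_hasDerivAt 0).continuousAt.continuousWithinAt
  have hIoi : ∫ x in Ioi (0:ℝ), (2 * b * x + c) * Complex.exp (b * x ^ 2 + c * x) =
      0 - Complex.exp (b * 0 ^ 2 + c * 0) := by
    refine integral_Ioi_of_hasDerivAt_of_tendsto ?_ (fun x _ => aux_hasDerivAt x)
      hint.integrableOn (aux_tendsto hb c)
    exact (aux_hasDerivAt 0).continuousAt.continuousWithinAt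
  rw [← intervalIntegral.integral_Iic_add_Ioi hint.integrableOn hint.integrableOn, hIic, hIoi]
  ring

lemma aux_integrable_mul {b : ℂ} (hb : b.re < 0) (c : ℂ) :
    Integrable (fun x : ℝ => (x : ℂ) * Complex.exp (b * x ^ 2 + c * x)) := by
  have hb0 : b ≠ 0 := by intro h; rw [h] at hb; simp at hb
  have h1 := aux_integrable_deriv hb c
  have h2 := integrable_cexp_quadratic' hb c 0
  simp only [add_zero] at h2
  have := ((h1.sub (h2.const_mul c)).const_mul (2 * b)⁻¹)
  convert this using 2 with x
  simp only [Pi.sub_apply]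
  field_simp
  ring

lemma aux_integral_mul {b : ℂ} (hb : b.re < 0) (c : ℂ) :
    ∫ x : ℝ, (x : ℂ) * Complex.exp (b * x ^ 2 + c * x) =
      -c / (2 * b) * ((↑Real.pi / -b) ^ (1 / 2 : ℂ) * Complex.exp (-(c ^ 2) / (4 * b))) := by
  have hb0 : b ≠ 0 := by intro h; rw [h] at hb; simp at hb
  have h2 := integrable_cexp_quadratic' hb c 0
  simp only [add_zero] at h2
  have key : (2 * b) * ∫ x : ℝ, (x : ℂ) * Complex.exp (b * x ^ 2 + c * x) =
      - (c * ∫ x : ℝ, Complex.exp (b * x ^ 2 + c * x)) := by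
    rw [← integral_const_mul, ← integral_const_mul, eq_neg_iff_add_eq_zero, ← integral_add
      ((aux_integrable_mul hb c).const_mul _) (h2.const_mul _)]
    rw [← aux_integral_deriv_zero hb c]
    congr 1 with x
    ring
  have hval : ∫ x : ℝ, Complex.exp (b * x ^ 2 + c * x) =
      (↑Real.pi / -b) ^ (1 / 2 : ℂ) * Complex.exp (-(c ^ 2) / (4 * b)) := by
    have := integral_cexp_quadratic hb c 0
    simpa [neg_div] using this
  rw [hval] at key
  field_simp at key ⊢
  linear_combination key

lemma gauss_int (h : ℝ≥0) (hne : h ≠ 0) (c d : ℂ) :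
    ∫ x : ℝ, (x : ℂ) * Complex.exp (c * x - c ^ 2 * (h : ℝ) / 2) *
        Complex.exp (d * x - d ^ 2 * (h : ℝ) / 2) ∂(gaussianReal 0 h) =
      (c + d) * (h : ℝ) * Complex.exp (c * d * (h : ℝ)) := by
  have hpos : 0 < (h : ℝ) := by
    exact_mod_cast pos_iff_ne_zero.mpr hne
  set b : ℂ := -(1 / (2 * ((h : ℝ) : ℂ))) with hbdef
  have hb : b.re < 0 := by
    have : b = ((-(1 / (2 * (h:ℝ))) : ℝ) : ℂ) := by push_cast [hbdef]; ring
    rw [this, Complex.ofReal_re]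
    have : (0:ℝ) < 1 / (2 * (h:ℝ)) := by positivity
    linarith
  have hb0 : b ≠ 0 := by intro hz; rw [hz] at hb; simp at hb
  have hS : (0:ℝ) < Real.sqrt (2 * Real.pi * h) := Real.sqrt_pos.mpr (by positivity)
  rw [gaussianReal_of_var_ne_zero 0 hne]
  have hwd : (gaussianPDF 0 h) = fun x => ((Real.toNNReal (gaussianPDFReal 0 h x) : ℝ≥0) : ENNReal) := rfl
  rw [hwd, integral_withDensity_eq_integral_smul ((measurable_gaussianPDFReal 0 h).real_toNNReal)]
  have hpt : ∀ x : ℝ, (Real.toNNReal (gaussianPDFReal 0 h x)) •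
      ((x : ℂ) * Complex.exp (c * x - c ^ 2 * (h : ℝ) / 2) *
        Complex.exp (d * x - d ^ 2 * (h : ℝ) / 2)) =
      ((Real.sqrt (2 * Real.pi * h))⁻¹ : ℝ) •
        (Complex.exp (-(c ^ 2 + d ^ 2) * (h : ℝ) / 2) *
          ((x : ℂ) * Complex.exp (b * x ^ 2 + (c + d) * x))) := by
    intro x
    rw [NNReal.smul_def, Real.coe_toNNReal _ (gaussianPDFReal_nonneg 0 h x)]
    rw [gaussianPDFReal]
    rw [Complex.real_smul, Complex.real_smul]
    push_cast
    have hh : ((h:ℝ):ℂ) ≠ 0 := by exact_mod_cast hpos.ne'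
    have key : Complex.exp (-((x:ℂ) - 0) ^ 2 / (2 * ((h:ℝ):ℂ))) *
        Complex.exp (c * x - c ^ 2 * ((h:ℝ):ℂ) / 2) *
        Complex.exp (d * x - d ^ 2 * ((h:ℝ):ℂ) / 2) =
        Complex.exp (-(c ^ 2 + d ^ 2) * ((h:ℝ):ℂ) / 2) *
          Complex.exp (b * x ^ 2 + (c + d) * x) := by
      rw [← Complex.exp_add, ← Complex.exp_add, ← Complex.exp_add]
      congr 1
      rw [hbdef]
      field_simp
      ring
    linear_combination ((Real.sqrt (2 * Real.pi * (h:ℝ)) : ℂ))⁻¹ * (x:ℂ) * key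
  simp_rw [hpt]
  rw [integral_smul, integral_const_mul, aux_integral_mul hb (c + d)]
  -- now pure algebra
  have hπb : (↑Real.pi / -b) = ((2 * Real.pi * (h:ℝ) : ℝ) : ℂ) := by
    rw [hbdef]
    have : ((h:ℝ):ℂ) ≠ 0 := by exact_mod_cast hpos.ne'
    push_cast
    field_simp
  have hsqrt : ((2 * Real.pi * (h:ℝ) : ℝ) : ℂ) ^ (1 / 2 : ℂ) =
      ((Real.sqrt (2 * Real.pi * (h:ℝ)) : ℝ) : ℂ) := by
    rw [show (1/2 : ℂ) = ((1/2 : ℝ) : ℂ) by norm_num,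
      ← Complex.ofReal_cpow (by positivity) (1/2 : ℝ), Real.sqrt_eq_rpow]
  rw [hπb, hsqrt]
  have hquarter : -((c + d) ^ 2) / (4 * b) = (c + d) ^ 2 * ((h:ℝ):ℂ) / 2 := by
    rw [hbdef]
    have : ((h:ℝ):ℂ) ≠ 0 := by exact_mod_cast hpos.ne'
    field_simp
    ring
  have hcoef : -(c + d) / (2 * b) = (c + d) * ((h:ℝ):ℂ) := by
    rw [hbdef]
    have : ((h:ℝ):ℂ) ≠ 0 := by exact_mod_cast hpos.ne'
    field_simp
  rw [hquarter, hcoef]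
  rw [Complex.real_smul, Complex.ofReal_inv]
  have hSne : ((Real.sqrt (2 * Real.pi * (h:ℝ)) : ℝ) : ℂ) ≠ 0 := by
    exact_mod_cast hS.ne'
  have hSS : (((Real.sqrt (2 * Real.pi * (h:ℝ)) : ℝ) : ℂ))⁻¹ *
      ((Real.sqrt (2 * Real.pi * (h:ℝ)) : ℝ) : ℂ) = 1 := inv_mul_cancel₀ hSne
  have hexp : Complex.exp (-(c ^ 2 + d ^ 2) * (h : ℝ) / 2) *
      Complex.exp ((c + d) ^ 2 * ((h:ℝ):ℂ) / 2) = Complex.exp (c * d * (h : ℝ)) := by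
    rw [← Complex.exp_add]
    congr 1
    ring
  calc (((Real.sqrt (2 * Real.pi * (h:ℝ)) : ℝ) : ℂ))⁻¹ *
        (Complex.exp (-(c ^ 2 + d ^ 2) * (h : ℝ) / 2) *
          ((c + d) * ((h:ℝ):ℂ) * (((Real.sqrt (2 * Real.pi * (h:ℝ)) : ℝ) : ℂ) *
            Complex.exp ((c + d) ^ 2 * ((h:ℝ):ℂ) / 2))))
      = ((((Real.sqrt (2 * Real.pi * (h:ℝ)) : ℝ) : ℂ))⁻¹ *
          ((Real.sqrt (2 * Real.pi * (h:ℝ)) : ℝ) : ℂ)) * ((c + d) * ((h:ℝ):ℂ)) *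
          (Complex.exp (-(c ^ 2 + d ^ 2) * (h : ℝ) / 2) *
            Complex.exp ((c + d) ^ 2 * ((h:ℝ):ℂ) / 2)) := by ring
    _ = (c + d) * (h : ℝ) * Complex.exp (c * d * (h : ℝ)) := by rw [hSS, hexp]; ring

theorem stmt_9 {Ω : Type*} [MeasurableSpace Ω] (P : Measure Ω) [IsProbabilityMeasure P]
    (X : Ω → ℝ) (hX : Measurable X) (h : ℝ≥0)
    (hlaw : Measure.map X P = gaussianReal 0 h) (c d : ℂ) :
    ∫ ω, (X ω : ℂ) * Complex.exp (c * X ω - c ^ 2 * (h : ℝ) / 2) *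
        Complex.exp (d * X ω - d ^ 2 * (h : ℝ) / 2) ∂P =
      (c + d) * (h : ℝ) * Complex.exp (c * d * (h : ℝ)) := by
  have hmf : AEStronglyMeasurable (fun x : ℝ => (x : ℂ) *
      Complex.exp (c * x - c ^ 2 * (h : ℝ) / 2) *
      Complex.exp (d * x - d ^ 2 * (h : ℝ) / 2)) (Measure.map X P) := by
    apply Continuous.aestronglyMeasurable
    fun_prop
  have h1 : ∫ ω, (X ω : ℂ) * Complex.exp (c * X ω - c ^ 2 * (h : ℝ) / 2) *
      Complex.exp (d * X ω - d ^ 2 * (h : ℝ) / 2) ∂P =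
      ∫ x : ℝ, (x : ℂ) * Complex.exp (c * x - c ^ 2 * (h : ℝ) / 2) *
        Complex.exp (d * x - d ^ 2 * (h : ℝ) / 2) ∂(gaussianReal 0 h) := by
    rw [← hlaw]
    exact (integral_map hX.aemeasurable hmf).symm
  rw [h1]
  by_cases hne : h = 0
  · subst hne
    rw [gaussianReal_zero_var, integral_dirac]
    simp
  · exact gauss_int h hne c d
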